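/- For all x ∈ [0,1), e - e^x·(x² - 3x + 3) < 0. -/

import Mathlib

theorem stmt_7 (x : ℝ) (hx0 : 0 ≤ x) (hx1 : x < 1) :
    Real.exp 1 - Real.exp x * (x ^ 2 - 3 * x + 3) < 0 := by
  have key : StrictAntiOn (fun y : ℝ => Real.exp y * (y ^ 2 - 3 * y + 3)) (Set.Icc 0 1) := by
    apply strictAntiOn_of_deriv_neg (convex_Icc 0 1)
    · exact (Real.continuous_exp.mul (by continuity)).continuousOn
    · intro y hy
      rw [interior_Icc] at hy
      have hd : HasDerivAt (fun y : ℝ => Real.exp y * (y ^ 2 - 3 * y + 3))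
          (Real.exp y * (y ^ 2 - 3 * y + 3) + Real.exp y * (2 * y - 3)) y := by
        have h1 := Real.hasDerivAt_exp y
        have h2 : HasDerivAt (fun y : ℝ => y ^ 2 - 3 * y + 3) (2 * y - 3) y := by
          have := ((hasDerivAt_pow 2 y).sub ((hasDerivAt_id y).const_mul 3)).add_const 3
          simpa using this
        exact h1.mul h2
      rw [hd.deriv]
      have := Real.exp_pos y
      nlinarith [mul_pos (Real.exp_pos y) (mul_pos hy.1 (sub_pos.mpr hy.2))]
  have h1 : (1 : ℝ) ∈ Set.Icc (0:ℝ) 1 := by norm_num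
  have hx : x ∈ Set.Icc (0:ℝ) 1 := ⟨hx0, hx1.le⟩
  have := key hx h1 hx1
  simp at this
  linarith
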